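/- Let L be an even lattice containing a primitive isotropic vector of divisor 1. If two primitive isotropic vectors l₁, l₂ ∈ L with div(l₁) = div(l₂) = 1 have isometric quotients l₁^⊥/ℤl₁ ≅ l₂^⊥/ℤl₂, then there exists an isometry γ ∈ O(L) with γ(l₁) = l₂. -/
import Mathlib


/-- Any additive monoid hom between `ℤ`-modules is `ℤ`-linear, for *any* given
`Module ℤ` instances. -/
def stmt10AuxIntLinear {L M : Type} [AddCommGroup L] [AddCommGroup M]
    [Module ℤ L] [Module ℤ M] (F : L →+ M) : L →ₗ[ℤ] M where
  toFun := F
  map_add' := F.map_add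
  map_smul' := fun c x => by
    have h1 := Int.cast_smul_eq_zsmul ℤ c x
    have h2 := Int.cast_smul_eq_zsmul ℤ c (F x)
    rw [Int.cast_id] at h1 h2
    rw [RingHom.id_apply, h1, h2]
    exact map_zsmul F c x

/-- Let `L` be an even lattice.  If two primitive isotropic vectors
`l₁, l₂ ∈ L` of divisor `1` (witnessed by hyperbolic partners `m₁, m₂`) have isometric
quotients `l₁^⊥/ℤl₁ ≅ l₂^⊥/ℤl₂` — realised, via the hyperbolic splittings, as an isometry
`ψ` between the orthogonal complements `(ℤl₁+ℤm₁)^⊥` and `(ℤl₂+ℤm₂)^⊥` — then there exists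
an isometry `γ ∈ O(L)` with `γ(l₁) = l₂`. -/
theorem stmt_10
    (L : Type) [AddCommGroup L] [Module ℤ L] [Module.Free ℤ L] [Module.Finite ℤ L]
    (B : L →ₗ[ℤ] L →ₗ[ℤ] ℤ)
    (hsymm : ∀ x y, B x y = B y x) (heven : ∀ x, Even (B x x))
    (hnd : ∀ x, (∀ y, B x y = 0) → x = 0)
    (l₁ m₁ l₂ m₂ : L)
    (hl₁ : B l₁ l₁ = 0) (hm₁ : B m₁ m₁ = 0) (hlm₁ : B l₁ m₁ = 1)
    (hl₂ : B l₂ l₂ = 0) (hm₂ : B m₂ m₂ = 0) (hlm₂ : B l₂ m₂ = 1)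
    (ψ : ↥(LinearMap.ker (B l₁) ⊓ LinearMap.ker (B m₁)) ≃ₗ[ℤ]
         ↥(LinearMap.ker (B l₂) ⊓ LinearMap.ker (B m₂)))
    (hψ : ∀ x y, B (↑(ψ x) : L) (↑(ψ y) : L) = B (x : L) (y : L)) :
    ∃ γ : L ≃ₗ[ℤ] L, (∀ x y, B (γ x) (γ y) = B x y) ∧ γ l₁ = l₂ := by
  have hml₁ : B m₁ l₁ = 1 := by rw [hsymm]; exact hlm₁
  have hml₂ : B m₂ l₂ = 1 := by rw [hsymm]; exact hlm₂
  have E1 : ∀ w : ↥(LinearMap.ker (B l₁) ⊓ LinearMap.ker (B m₁)), B l₁ (w : L) = 0 :=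
    fun w => (Submodule.mem_inf.1 w.2).1
  have E2 : ∀ w : ↥(LinearMap.ker (B l₁) ⊓ LinearMap.ker (B m₁)), B m₁ (w : L) = 0 :=
    fun w => (Submodule.mem_inf.1 w.2).2
  have E3 : ∀ w : ↥(LinearMap.ker (B l₁) ⊓ LinearMap.ker (B m₁)), B (w : L) l₁ = 0 :=
    fun w => by rw [hsymm]; exact E1 w
  have E4 : ∀ w : ↥(LinearMap.ker (B l₁) ⊓ LinearMap.ker (B m₁)), B (w : L) m₁ = 0 :=
    fun w => by rw [hsymm]; exact E2 w
  have F1 : ∀ w : ↥(LinearMap.ker (B l₂) ⊓ LinearMap.ker (B m₂)), B l₂ (w : L) = 0 :=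
    fun w => (Submodule.mem_inf.1 w.2).1
  have F2 : ∀ w : ↥(LinearMap.ker (B l₂) ⊓ LinearMap.ker (B m₂)), B m₂ (w : L) = 0 :=
    fun w => (Submodule.mem_inf.1 w.2).2
  have F3 : ∀ w : ↥(LinearMap.ker (B l₂) ⊓ LinearMap.ker (B m₂)), B (w : L) l₂ = 0 :=
    fun w => by rw [hsymm]; exact F1 w
  have F4 : ∀ w : ↥(LinearMap.ker (B l₂) ⊓ LinearMap.ker (B m₂)), B (w : L) m₂ = 0 :=
    fun w => by rw [hsymm]; exact F2 w
  have mem₁ : ∀ x : L, x - (B m₁ x) • l₁ - (B l₁ x) • m₁ ∈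
      LinearMap.ker (B l₁) ⊓ LinearMap.ker (B m₁) := by
    intro x
    refine Submodule.mem_inf.2 ⟨?_, ?_⟩ <;>
      simp [LinearMap.mem_ker, map_zsmul, smul_eq_mul, hl₁, hm₁, hlm₁, hml₁]
  have mem₂ : ∀ x : L, x - (B m₂ x) • l₂ - (B l₂ x) • m₂ ∈
      LinearMap.ker (B l₂) ⊓ LinearMap.ker (B m₂) := by
    intro x
    refine Submodule.mem_inf.2 ⟨?_, ?_⟩ <;>
      simp [LinearMap.mem_ker, map_zsmul, smul_eq_mul, hl₂, hm₂, hlm₂, hml₂]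
  let p₁ : L → ↥(LinearMap.ker (B l₁) ⊓ LinearMap.ker (B m₁)) :=
    fun x => ⟨x - (B m₁ x) • l₁ - (B l₁ x) • m₁, mem₁ x⟩
  let p₂ : L → ↥(LinearMap.ker (B l₂) ⊓ LinearMap.ker (B m₂)) :=
    fun x => ⟨x - (B m₂ x) • l₂ - (B l₂ x) • m₂, mem₂ x⟩
  have hp₁ : ∀ x : L, (p₁ x : L) = x - (B m₁ x) • l₁ - (B l₁ x) • m₁ := fun x => rfl
  have hp₂ : ∀ x : L, (p₂ x : L) = x - (B m₂ x) • l₂ - (B l₂ x) • m₂ := fun x => rfl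
  have p₁add : ∀ x y : L, p₁ (x + y) = p₁ x + p₁ y := by
    intro x y
    apply Subtype.ext
    simp only [p₁, map_add, add_zsmul, Submodule.coe_add]
    abel
  have p₂add : ∀ x y : L, p₂ (x + y) = p₂ x + p₂ y := by
    intro x y
    apply Subtype.ext
    simp only [p₂, map_add, add_zsmul, Submodule.coe_add]
    abel
  let F : L →+ L :=
    AddMonoidHom.mk' (fun x => (B m₁ x) • l₂ + (B l₁ x) • m₂ + ((ψ (p₁ x) : L)))
      (fun x y => by
        simp only [map_add, add_zsmul, p₁add, Submodule.coe_add]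
        abel)
  let G : L →+ L :=
    AddMonoidHom.mk' (fun x => (B m₂ x) • l₁ + (B l₂ x) • m₁ + ((ψ.symm (p₂ x) : L)))
      (fun x y => by
        simp only [map_add, add_zsmul, p₂add, Submodule.coe_add]
        abel)
  let f : L →ₗ[ℤ] L := stmt10AuxIntLinear F
  let g : L →ₗ[ℤ] L := stmt10AuxIntLinear G
  have hf : ∀ x : L, f x = (B m₁ x) • l₂ + (B l₁ x) • m₂ + ((ψ (p₁ x) : L)) := fun x => by rfl
  have hg : ∀ x : L, g x = (B m₂ x) • l₁ + (B l₂ x) • m₁ + ((ψ.symm (p₂ x) : L)) := fun x => by rfl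
  have hBl₂f : ∀ x : L, B l₂ (f x) = B l₁ x := by
    intro x; rw [hf]
    simp [map_zsmul, smul_eq_mul, hl₂, hlm₂, F1 (ψ (p₁ x))]
  have hBm₂f : ∀ x : L, B m₂ (f x) = B m₁ x := by
    intro x; rw [hf]
    simp [map_zsmul, smul_eq_mul, hm₂, hml₂, F2 (ψ (p₁ x))]
  have hBl₁g : ∀ x : L, B l₁ (g x) = B l₂ x := by
    intro x; rw [hg]
    simp [map_zsmul, smul_eq_mul, hl₁, hlm₁, E1 (ψ.symm (p₂ x))]
  have hBm₁g : ∀ x : L, B m₁ (g x) = B m₂ x := by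
    intro x; rw [hg]
    simp [map_zsmul, smul_eq_mul, hm₁, hml₁, E2 (ψ.symm (p₂ x))]
  have hp₂f : ∀ x : L, p₂ (f x) = ψ (p₁ x) := by
    intro x
    apply Subtype.ext
    rw [hp₂, hBl₂f, hBm₂f, hf]
    abel
  have hp₁g : ∀ x : L, p₁ (g x) = ψ.symm (p₂ x) := by
    intro x
    apply Subtype.ext
    rw [hp₁, hBl₁g, hBm₁g, hg]
    abel
  have hgf : ∀ x : L, g (f x) = x := by
    intro x
    rw [hg, hBl₂f, hBm₂f, hp₂f, ψ.symm_apply_apply, hp₁]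
    abel
  have hfg : ∀ x : L, f (g x) = x := by
    intro x
    rw [hf, hBl₁g, hBm₁g, hp₁g, ψ.apply_symm_apply, hp₂]
    abel
  refine ⟨LinearEquiv.ofLinear f g (LinearMap.ext hfg) (LinearMap.ext hgf), ?_, ?_⟩
  · intro x y
    have hdecomp : ∀ z : L, z = (B m₁ z) • l₁ + (B l₁ z) • m₁ + (p₁ z : L) := by
      intro z; rw [hp₁]; abel
    have key : B (f x) (f y) = B x y := by
      conv_rhs => rw [hdecomp x, hdecomp y]
      rw [hf, hf]
      simp only [map_add, map_zsmul, LinearMap.add_apply, LinearMap.smul_apply,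
        smul_eq_mul, hψ, E1, E2, E3, E4, F1, F2, F3, F4,
        E1 (p₁ y), E2 (p₁ y), E3 (p₁ x), E4 (p₁ x),
        hl₂, hm₂, hlm₂, hml₂, hl₁, hm₁, hlm₁, hml₁]
    simpa using key
  · show f l₁ = l₂
    rw [hf]
    have hz : p₁ l₁ = 0 := by
      apply Subtype.ext
      rw [hp₁, hml₁, hl₁]
      simp
    rw [hz, map_zero, hml₁, hl₁]
    simp
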